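/- Consider the warped product metric g = dr² + F'(r)² ḡ on ℝ × N^{n−1}, where F : ℝ → ℝ is smooth with F' > 0 and (N, ḡ) has scalar curvature R̄. Suppose the scalar curvature R of g is nonnegative everywhere and R̄ ≤ 0 everywhere. Then R ≡ 0, R̄ ≡ 0, F' is constant, and g is the Riemannian product metric dr² + c² ḡ for some constant c > 0. -/

import Mathlib

/-- For the warped product `g = dr² + F'(r)² ḡ` on `ℝ × N^{n-1}` with `F' > 0`,
whose scalar curvature is
`R = (F')⁻² R̄ − (n−1)(n−2)(F''/F')² − 2(n−1) F'''/F'`, if `R ≥ 0` everywhere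
and the fiber scalar curvature satisfies `R̄ ≤ 0` everywhere, then `R ≡ 0`,
`R̄ ≡ 0`, and `F'` is a (positive) constant `c`, so `g` is the Riemannian
product metric `dr² + c² ḡ`. -/
theorem stmt_17 (n : ℕ) (hn : 3 ≤ n) {N : Type*} [Nonempty N]
    (F : ℝ → ℝ) (hF : ContDiff ℝ 2 F)
    (hF''' : ∀ r : ℝ, DifferentiableAt ℝ (deriv (deriv F)) r)
    (hF' : ∀ r : ℝ, 0 < deriv F r)
    (Rbar : N → ℝ) (R : ℝ × N → ℝ)
    (hR : ∀ r x, R (r, x)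
      = (deriv F r) ^ (-2 : ℤ) * Rbar x
        - ((n : ℝ) - 1) * ((n : ℝ) - 2)
          * (deriv (deriv F) r / deriv F r) ^ 2
        - 2 * ((n : ℝ) - 1) * (deriv (deriv (deriv F)) r / deriv F r))
    (hRnonneg : ∀ p, 0 ≤ R p) (hRbarnonpos : ∀ x, Rbar x ≤ 0) :
    (∀ p, R p = 0) ∧ (∀ x, Rbar x = 0) ∧ ∃ c > 0, ∀ r, deriv F r = c := by
  obtain ⟨x₀⟩ := ‹Nonempty N›
  set f := deriv F with hf
  set g := deriv f with hg
  have hn1 : (1 : ℝ) ≤ (n : ℝ) - 1 := by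
    have : (3 : ℝ) ≤ (n : ℝ) := by exact_mod_cast hn
    linarith
  -- f is differentiable (F is C²)
  have hFC : ContDiff ℝ (1 + 1 : ℕ∞) F := by norm_num; exact hF
  have hfC : ContDiff ℝ 1 f := (contDiff_succ_iff_deriv.mp hFC).2.2
  have hfdiff : Differentiable ℝ f := hfC.differentiable one_ne_zero
  have hgdiff : Differentiable ℝ g := fun r => hF''' r
  have hn2 : (1 : ℝ) ≤ (n : ℝ) - 2 := by
    have : (3 : ℝ) ≤ (n : ℝ) := by exact_mod_cast hn
    linarith
  -- F''' ≤ 0 everywhere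
  have h3 : ∀ r, deriv g r ≤ 0 := by
    intro r
    have h0 := hRnonneg (r, x₀)
    rw [hR r x₀] at h0
    have hfr := hF' r
    have h1 : (f r) ^ (-2 : ℤ) * Rbar x₀ ≤ 0 :=
      mul_nonpos_of_nonneg_of_nonpos (le_of_lt (zpow_pos hfr _)) (hRbarnonpos x₀)
    have h2 : 0 ≤ ((n : ℝ) - 1) * ((n : ℝ) - 2) * (g r / f r) ^ 2 :=
      mul_nonneg (mul_nonneg (by linarith) (by linarith)) (sq_nonneg _)
    have h5 : deriv g r / f r ≤ 0 := by
      dsimp [f, g] at *; nlinarith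
    have h6 : deriv g r / f r * f r ≤ 0 :=
      mul_nonpos_of_nonpos_of_nonneg h5 (le_of_lt hfr)
    rwa [div_mul_cancel₀ _ (ne_of_gt hfr)] at h6
  -- g is antitone
  have hganti : Antitone g := antitone_of_deriv_nonpos hgdiff h3
  -- g ≡ 0
  have hg0 : ∀ r, g r = 0 := by
    intro r0
    by_contra hne
    rcases lt_or_gt_of_ne hne with hneg | hpos
    · -- g r0 < 0 : go right
      set t := r0 + (1 + f r0 / (-g r0)) with ht
      have htr : r0 < t := by
        have : 0 < f r0 / (-g r0) := div_pos (hF' r0) (by linarith)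
        simp [ht]; linarith
      obtain ⟨ξ, hξ, hξeq⟩ := exists_deriv_eq_slope f htr
        (hfdiff.continuous.continuousOn) (hfdiff.differentiableOn)
      have hgl : g ξ ≤ g r0 := hganti (le_of_lt hξ.1)
      have hslope : (f t - f r0) / (t - r0) ≤ g r0 := by
        rw [← hξeq]; exact hgl
      have hfr0 : 0 < f r0 := hF' r0
      have hft : 0 < f t := hF' t
      have hd : 0 < t - r0 := by linarith
      have : f t - f r0 ≤ g r0 * (t - r0) := by
        rw [div_le_iff₀ hd] at hslope; linarith
      have htval : t - r0 = 1 + f r0 / (-g r0) := by rw [ht]; ring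
      have : f t ≤ f r0 + g r0 * (1 + f r0 / (-g r0)) := by
        rw [htval] at this; linarith
      have hne'' : g r0 ≠ 0 := ne_of_lt hneg
      have hkey : g r0 * (f r0 / (-g r0)) = -f r0 := by
        field_simp
      nlinarith
    · -- g r0 > 0 : go left
      set s := r0 - (1 + f r0 / g r0) with hs
      have hsr : s < r0 := by
        have : 0 < f r0 / g r0 := div_pos (hF' r0) hpos
        simp [hs]; linarith
      obtain ⟨ξ, hξ, hξeq⟩ := exists_deriv_eq_slope f hsr
        (hfdiff.continuous.continuousOn) (hfdiff.differentiableOn)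
      have hgl : g r0 ≤ g ξ := hganti (le_of_lt hξ.2)
      have hslope : g r0 ≤ (f r0 - f s) / (r0 - s) := by
        rw [← hξeq]; exact hgl
      have hfr0 : 0 < f r0 := hF' r0
      have hfs : 0 < f s := hF' s
      have hd : 0 < r0 - s := by linarith
      have : g r0 * (r0 - s) ≤ f r0 - f s := by
        rw [le_div_iff₀ hd] at hslope; linarith
      have hsval : r0 - s = 1 + f r0 / g r0 := by rw [hs]; ring
      have hne'' : g r0 ≠ 0 := ne_of_gt hpos
      have hkey : g r0 * (f r0 / g r0) = f r0 := by field_simp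
      rw [hsval] at this
      nlinarith
  -- f constant
  have hfc : ∀ r, f r = f 0 := fun r => is_const_of_deriv_eq_zero hfdiff hg0 r 0
  have hc : 0 < f 0 := hF' 0
  -- third derivative is zero
  have hgz : g = fun _ => (0 : ℝ) := funext hg0
  have hderiv3 : ∀ r, deriv g r = 0 := by
    intro r; rw [hgz]; simp
  -- Rbar ≡ 0
  have hRbar0 : ∀ x, Rbar x = 0 := by
    intro x
    have h0 := hRnonneg (0, x)
    rw [hR 0 x] at h0
    have hz1 : g 0 = 0 := hg0 0
    have hz2 : deriv g 0 = 0 := hderiv3 0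
    rw [hz1, hz2, zero_div] at h0
    norm_num at h0
    have hf0 : f 0 ≠ 0 := (hF' 0).ne'
    have hsq : (0:ℝ) < f 0 ^ 2 := pow_pos (hF' 0) 2
    have hEq : Rbar x = f 0 ^ 2 * ((f 0 ^ 2)⁻¹ * Rbar x) := by
      field_simp
    have hnn : 0 ≤ Rbar x := by
      rw [hEq]; exact mul_nonneg hsq.le h0
    linarith [hRbarnonpos x]
  refine ⟨?_, hRbar0, ⟨f 0, hc, hfc⟩⟩
  intro p
  obtain ⟨r, x⟩ := p
  rw [hR r x, hRbar0 x, hg0 r, hderiv3 r]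
  norm_num
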